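/- Let A and A_α = A + αI both be Sylvester, with α ≠ 0 a real number. Let X^Q solve A X + X Aᵀ + Q = 0, X_α^Q solve A_α X + X A_αᵀ + Q = 0, X_α^{X^Q} solve A_α X + X A_αᵀ + X^Q = 0, and X^{X_α^Q} solve A X + X Aᵀ + X_α^Q = 0. Then X_α^{X^Q} = (X_α^Q - X^Q)/(2α) = X^{X_α^Q}. -/

import Mathlib

open Matrix MeasureTheory

/-- `A` is Sylvester: no two complex eigenvalues `λᵢ, λⱼ` (possibly `i = j`)
satisfy `λᵢ = -λⱼ`. -/
def IsSylvester {n : ℕ} (A : Matrix (Fin n) (Fin n) ℝ) : Prop :=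
  ∀ μ ∈ spectrum ℂ (A.map (Complex.ofReal)),
    ∀ ν ∈ spectrum ℂ (A.map (Complex.ofReal)), μ ≠ -ν

/-- `A` is stable (Hurwitz): every complex eigenvalue has negative real part. -/
def IsStableMatrix {n : ℕ} (A : Matrix (Fin n) (Fin n) ℝ) : Prop :=
  ∀ μ ∈ spectrum ℂ (A.map (Complex.ofReal)), μ.re < 0

/-- The matrix exponential `e^{tA}`. -/
noncomputable def mexp {n : ℕ} (A : Matrix (Fin n) (Fin n) ℝ) (t : ℝ) :
    Matrix (Fin n) (Fin n) ℝ :=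
  NormedSpace.exp (t • A)

private lemma spec_iff_det {m : ℕ} (M : Matrix (Fin m) (Fin m) ℂ) (μ : ℂ) :
    μ ∈ spectrum ℂ M ↔ (μ • (1 : Matrix (Fin m) (Fin m) ℂ) - M).det = 0 := by
  rw [spectrum.mem_iff, Algebra.algebraMap_eq_smul_one, Matrix.isUnit_iff_isUnit_det,
    isUnit_iff_ne_zero, not_not]

private lemma charpoly_eval' {m : ℕ} (M : Matrix (Fin m) (Fin m) ℂ) (μ : ℂ) :
    M.charpoly.eval μ = (μ • (1 : Matrix (Fin m) (Fin m) ℂ) - M).det := by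
  have h := RingHom.map_det (Polynomial.evalRingHom μ) (Matrix.charmatrix M)
  rw [Matrix.charpoly]
  have : (Matrix.charmatrix M).map (Polynomial.evalRingHom μ) =
      μ • (1 : Matrix (Fin m) (Fin m) ℂ) - M := by
    ext i j
    by_cases hij : i = j
    · subst hij
      simp [Matrix.map_apply, Matrix.charmatrix_apply_eq]
    · simp [Matrix.map_apply, Matrix.charmatrix_apply_ne _ _ _ hij, Matrix.one_apply_ne hij]
  rw [← this]
  exact h

private lemma aeval_comm {m : ℕ} (A B X : Matrix (Fin m) (Fin m) ℂ)
    (h : A * X = X * B) (q : Polynomial ℂ) :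
    (Polynomial.aeval A q) * X = X * (Polynomial.aeval B q) := by
  have hpow : ∀ k : ℕ, A ^ k * X = X * B ^ k := by
    intro k
    induction k with
    | zero => simp
    | succ k ih =>
      calc A ^ (k + 1) * X = A ^ k * (A * X) := by rw [pow_succ, mul_assoc]
        _ = A ^ k * X * B := by rw [h, mul_assoc]
        _ = X * B ^ (k + 1) := by rw [ih, pow_succ, mul_assoc]
  induction q using Polynomial.induction_on' with
  | add p q hp hq => simp [map_add, add_mul, mul_add, hp, hq]
  | monomial k c =>
    simp only [Polynomial.aeval_monomial, Algebra.algebraMap_eq_smul_one,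
      smul_mul_assoc, one_mul, mul_smul_comm, hpow k]

private lemma sylv_aux {m : ℕ} (A B X : Matrix (Fin m) (Fin m) ℂ)
    (hdisj : ∀ μ ∈ spectrum ℂ A, μ ∉ spectrum ℂ B) (h : A * X = X * B) : X = 0 := by
  rcases Nat.eq_zero_or_pos m with hm | hm
  · subst hm
    ext i j
    exact i.elim0
  · have hq := Matrix.aeval_self_charpoly A
    have hc := aeval_comm A B X h A.charpoly
    rw [hq, zero_mul] at hc
    have hdeg : 0 < A.charpoly.degree := by
      rw [Polynomial.natDegree_pos_iff_degree_pos.symm, Matrix.charpoly_natDegree_eq_dim]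
      simpa using hm
    have hunit : IsUnit (Polynomial.aeval B A.charpoly) := by
      rw [← spectrum.zero_notMem_iff ℂ]
      intro h0
      rw [spectrum.map_polynomial_aeval_of_degree_pos B A.charpoly hdeg] at h0
      obtain ⟨ν, hν, hev⟩ := h0
      have hνA : ν ∈ spectrum ℂ A := by
        rw [spec_iff_det, ← charpoly_eval']
        exact hev
      exact hdisj ν hνA hν
    obtain ⟨u, hu⟩ := hunit
    have hXu : X * (u : Matrix (Fin m) (Fin m) ℂ) = 0 := by rw [hu]; exact hc.symm
    calc X = X * (u : Matrix (Fin m) (Fin m) ℂ) * (↑u⁻¹ : Matrix (Fin m) (Fin m) ℂ) := by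
            rw [mul_assoc, u.mul_inv, mul_one]
      _ = 0 := by rw [hXu, zero_mul]

private lemma spectrum_transpose {m : ℕ} (M : Matrix (Fin m) (Fin m) ℂ) :
    spectrum ℂ Mᵀ = spectrum ℂ M := by
  ext μ
  rw [spec_iff_det, spec_iff_det, ← Matrix.det_transpose (μ • 1 - M)]
  congr! 2
  rw [Matrix.transpose_sub, Matrix.transpose_smul, Matrix.transpose_one]

private lemma spectrum_neg_mem {m : ℕ} (M : Matrix (Fin m) (Fin m) ℂ) (μ : ℂ) :
    μ ∈ spectrum ℂ (-M) ↔ -μ ∈ spectrum ℂ M := by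
  rw [spec_iff_det, spec_iff_det]
  have : μ • (1 : Matrix (Fin m) (Fin m) ℂ) - (-M) = -((-μ) • 1 - M) := by
    ext i j; simp; ring
  rw [this, Matrix.det_neg]
  simp

/-- Uniqueness of solutions to the Lyapunov equation for a Sylvester matrix. -/
private lemma lyap_unique {m : ℕ} {S : Matrix (Fin m) (Fin m) ℝ} (hS : IsSylvester S)
    {X₁ X₂ Q : Matrix (Fin m) (Fin m) ℝ}
    (h1 : S * X₁ + X₁ * Sᵀ + Q = 0) (h2 : S * X₂ + X₂ * Sᵀ + Q = 0) : X₁ = X₂ := by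
  set D := X₁ - X₂ with hD
  have hDeq : S * D + D * Sᵀ = 0 := by
    have := sub_eq_zero_of_eq (h1.trans h2.symm)
    calc S * D + D * Sᵀ
        = (S * X₁ + X₁ * Sᵀ + Q) - (S * X₂ + X₂ * Sᵀ + Q) := by
          simp [hD, mul_sub, sub_mul]; abel
      _ = 0 := by rw [h1, h2, sub_zero]
  -- pass to ℂ
  have hmap0 : (S.map Complex.ofReal) * (D.map Complex.ofReal)
      + (D.map Complex.ofReal) * (S.map Complex.ofReal)ᵀ = 0 := by
    have := congrArg (Complex.ofRealHom.mapMatrix :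
      Matrix (Fin m) (Fin m) ℝ →+* Matrix (Fin m) (Fin m) ℂ) hDeq
    simp [map_add, _root_.map_mul, RingHom.mapMatrix_apply, Matrix.transpose_map] at this
    exact this
  have hmap : (S.map Complex.ofReal) * (D.map Complex.ofReal)
      = (D.map Complex.ofReal) * (-(S.map Complex.ofReal)ᵀ) := by
    rw [mul_neg]
    exact eq_neg_of_add_eq_zero_left hmap0
  have hdisj : ∀ μ ∈ spectrum ℂ (S.map Complex.ofReal),
      μ ∉ spectrum ℂ (-(S.map Complex.ofReal)ᵀ) := by
    intro μ hμ hμ'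
    rw [spectrum_neg_mem, spectrum_transpose] at hμ'
    exact hS μ hμ (-μ) hμ' (by ring)
  have hD0 := sylv_aux _ _ _ hdisj hmap
  have hDz : D = 0 := by
    ext i j
    have := congrFun (congrFun hD0 i) j
    simpa [Matrix.map_apply, Complex.ofReal_eq_zero] using this
  exact sub_eq_zero.mp hDz

theorem lyapunov_shifted_difference {n : ℕ}
    (A Q XQ XaQ Y Z : Matrix (Fin n) (Fin n) ℝ) (α : ℝ) (hα : α ≠ 0)
    (hA : IsSylvester A) (hAa : IsSylvester (A + α • (1 : Matrix (Fin n) (Fin n) ℝ)))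
    (hXQ : A * XQ + XQ * Aᵀ + Q = 0)
    (hXaQ : (A + α • 1) * XaQ + XaQ * (A + α • 1)ᵀ + Q = 0)
    (hY : (A + α • 1) * Y + Y * (A + α • 1)ᵀ + XQ = 0)
    (hZ : A * Z + Z * Aᵀ + XaQ = 0) :
    Y = (2 * α)⁻¹ • (XaQ - XQ) ∧ Z = (2 * α)⁻¹ • (XaQ - XQ) := by
  obtain ⟨W, hW⟩ : ∃ W : Matrix (Fin n) (Fin n) ℝ, W = (2 * α)⁻¹ • (XaQ - XQ) := ⟨_, rfl⟩
  rw [← hW]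
  have htr : (A + α • (1 : Matrix (Fin n) (Fin n) ℝ))ᵀ = Aᵀ + α • 1 := by
    rw [Matrix.transpose_add, Matrix.transpose_smul, Matrix.transpose_one]
  have e1 : A * XQ + XQ * Aᵀ = -Q := eq_neg_of_add_eq_zero_left hXQ
  have e2 : A * XaQ + XaQ * Aᵀ = -Q - (2 * α) • XaQ := by
    have h' := hXaQ
    rw [htr, add_mul, mul_add, Matrix.smul_mul, Matrix.mul_smul, one_mul, mul_one] at h'
    have : A * XaQ + XaQ * Aᵀ + (2 * α) • XaQ + Q = 0 := by
      rw [two_mul, add_smul]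
      calc A * XaQ + XaQ * Aᵀ + (α • XaQ + α • XaQ) + Q
          = A * XaQ + α • XaQ + (XaQ * Aᵀ + α • XaQ) + Q := by abel
        _ = 0 := h'
    have := eq_neg_of_add_eq_zero_left this
    calc A * XaQ + XaQ * Aᵀ
        = (A * XaQ + XaQ * Aᵀ + (2 * α) • XaQ) - (2 * α) • XaQ := by abel
      _ = -Q - (2 * α) • XaQ := by rw [this]
  have key : A * W + W * Aᵀ = -XaQ := by
    have hs : (2 * α)⁻¹ • ((2 * α) • XaQ) = XaQ := by
      rw [smul_smul, inv_mul_cancel₀ (mul_ne_zero two_ne_zero hα), one_smul]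
    calc A * W + W * Aᵀ
        = (2 * α)⁻¹ • ((A * XaQ + XaQ * Aᵀ) - (A * XQ + XQ * Aᵀ)) := by
          rw [hW, Matrix.mul_smul, Matrix.smul_mul, ← smul_add, mul_sub, sub_mul]
          congr 1
          abel
      _ = (2 * α)⁻¹ • (-(2 * α) • XaQ) := by
          rw [e1, e2]
          congr 1
          rw [neg_smul]
          abel
      _ = -XaQ := by rw [neg_smul, smul_neg, hs]
  have keyW : A * W + W * Aᵀ + (2 * α) • W = -XQ := by
    have h2W : (2 * α) • W = XaQ - XQ := by
      rw [hW, smul_smul, mul_inv_cancel₀ (mul_ne_zero two_ne_zero hα), one_smul]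
    rw [key, h2W]
    abel
  have hWZ : A * W + W * Aᵀ + XaQ = 0 := by rw [key]; abel
  have hWY : (A + α • 1) * W + W * (A + α • 1)ᵀ + XQ = 0 := by
    rw [htr, add_mul, mul_add, Matrix.smul_mul, Matrix.mul_smul, one_mul, mul_one]
    calc A * W + α • W + (W * Aᵀ + α • W) + XQ
        = (A * W + W * Aᵀ + (2 * α) • W) + XQ := by
          rw [two_mul, add_smul]; abel
      _ = 0 := by rw [keyW]; abel
  exact ⟨lyap_unique hAa hY hWY, lyap_unique hA hZ hWZ⟩
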